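/- Let n ≥ 1 and work in EuclideanSpace ℝ (Fin n). Let f : ℝⁿ → ℝⁿ be Lipschitz with constant L_f and let g : ℝⁿ → Matrix (Fin n) (Fin n) ℝ be Lipschitz with constant L_g with respect to the operator norm on matrices. Assume there exists g̲ > 0 such that ⟪v, g(x) v⟫ ≥ g̲ ‖v‖² for all x, v ∈ ℝⁿ. Fix x_i ∈ ℝⁿ, constants ũ ≥ 0, δ̃ ≥ 0, σ̲ > 0, and σ satisfying σ g̲ ≥ L_f + L_g ũ + σ̲. Let û : [0,∞) → ℝⁿ satisfy ‖û(t)‖ ≤ ũ and let δ : [0,∞) → ℝⁿ satisfy ‖δ(t)‖ ≤ δ̃ for all t ≥ 0. Let ê, e : [0,∞) → ℝⁿ be differentiable trajectories satisfying ê'(t) = f(ê(t)+x_i) + g(ê(t)+x_i) û(t) and e'(t) = f(e(t)+x_i) + g(e(t)+x_i) (û(t) − σ (e(t) − ê(t))) + δ(t). If the initial deviation satisfies ‖e(0) − ê(0)‖ ≤ δ̃/σ̲, then ‖e(t) − ê(t)‖ ≤ δ̃/σ̲ for all t ≥ 0. In other words, the ball Q = {q ∈ ℝⁿ : ‖q‖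 ≤ δ̃/σ̲} is a robust invariant set for the deviation dynamics under the feedback u = û − σ q. -/

import Mathlib

set_option maxHeartbeats 1000000


open scoped RealInnerProductSpace

/-- **Robust control invariance form of Lemma 1**: under the same hypotheses as Lemma 1
(Lipschitz `f` and `g`, coercive input matrix, bounded nominal input and disturbance, gain
`σ g̲ ≥ L_f + L_g ũ + σ̲`), if the initial deviation satisfies `‖e(0) − ê(0)‖ ≤ δ̃/σ̲` then
`‖e(t) − ê(t)‖ ≤ δ̃/σ̲` for all `t ≥ 0`; i.e. the ball `Q = {q : ‖q‖ ≤ δ̃/σ̲}` is a robust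
invariant set for the deviation dynamics under the feedback `u = û − σ q`. -/
theorem tube_mpc_rci_set
    (n : ℕ) (hn : 1 ≤ n)
    (f : EuclideanSpace ℝ (Fin n) → EuclideanSpace ℝ (Fin n))
    (g : EuclideanSpace ℝ (Fin n) → Matrix (Fin n) (Fin n) ℝ)
    (Lf Lg : ℝ)
    (hf : ∀ x y, ‖f x - f y‖ ≤ Lf * ‖x - y‖)
    (hg : ∀ x y, ‖Matrix.toEuclideanCLM (𝕜 := ℝ) (g x) - Matrix.toEuclideanCLM (𝕜 := ℝ) (g y)‖
      ≤ Lg * ‖x - y‖)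
    (glow : ℝ) (hglow : 0 < glow)
    (hcoerc : ∀ (x v : EuclideanSpace ℝ (Fin n)),
      glow * ‖v‖ ^ 2 ≤ ⟪v, Matrix.toEuclideanCLM (𝕜 := ℝ) (g x) v⟫)
    (xi : EuclideanSpace ℝ (Fin n))
    (utilde δtilde σlow σ : ℝ)
    (hutilde : 0 ≤ utilde) (hδtilde : 0 ≤ δtilde) (hσlow : 0 < σlow)
    (hσ : Lf + Lg * utilde + σlow ≤ σ * glow)
    (uhat δ : ℝ → EuclideanSpace ℝ (Fin n))
    (huhat : ∀ t : ℝ, 0 ≤ t → ‖uhat t‖ ≤ utilde)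
    (hδ : ∀ t : ℝ, 0 ≤ t → ‖δ t‖ ≤ δtilde)
    (ehat e : ℝ → EuclideanSpace ℝ (Fin n))
    (hehat : ∀ t : ℝ, 0 ≤ t → HasDerivAt ehat
      (f (ehat t + xi) + Matrix.toEuclideanCLM (𝕜 := ℝ) (g (ehat t + xi)) (uhat t)) t)
    (he : ∀ t : ℝ, 0 ≤ t → HasDerivAt e
      (f (e t + xi)
        + Matrix.toEuclideanCLM (𝕜 := ℝ) (g (e t + xi)) (uhat t - σ • (e t - ehat t))
        + δ t) t)
    (h0 : ‖e 0 - ehat 0‖ ≤ δtilde / σlow) :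
    ∀ t : ℝ, 0 ≤ t → ‖e t - ehat t‖ ≤ δtilde / σlow := by
  set G : EuclideanSpace ℝ (Fin n) → _ :=
    fun x => Matrix.toEuclideanCLM (𝕜 := ℝ) (g x) with hG
  set r : ℝ := δtilde / σlow with hr
  have hr0 : 0 ≤ r := div_nonneg hδtilde hσlow.le
  have hrδ : δtilde = σlow * r := by rw [hr, mul_div_assoc', eq_div_iff hσlow.ne', mul_comm]
  -- Lf, Lg ≥ 0
  obtain ⟨i⟩ : Nonempty (Fin n) := ⟨⟨0, hn⟩⟩
  have hv1 : ‖(EuclideanSpace.single i (1:ℝ))‖ = 1 := by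
    simp [EuclideanSpace.norm_single]
  have hLf : 0 ≤ Lf := by
    have h2 := hf (EuclideanSpace.single i (1:ℝ)) 0
    rw [sub_zero, hv1, mul_one] at h2
    linarith [norm_nonneg (f (EuclideanSpace.single i (1:ℝ)) - f 0)]
  have hLg : 0 ≤ Lg := by
    have h2 := hg (EuclideanSpace.single i (1:ℝ)) 0
    rw [sub_zero, hv1, mul_one] at h2
    linarith [norm_nonneg (Matrix.toEuclideanCLM (𝕜 := ℝ) (g (EuclideanSpace.single i (1:ℝ)))
      - Matrix.toEuclideanCLM (𝕜 := ℝ) (g 0))]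
  have hσpos : 0 < σ := by nlinarith
  -- deviation and its derivative
  set q : ℝ → EuclideanSpace ℝ (Fin n) := fun s => e s - ehat s with hqdef
  set D : ℝ → EuclideanSpace ℝ (Fin n) := fun s =>
    (f (e s + xi) + G (e s + xi) (uhat s - σ • (e s - ehat s)) + δ s)
      - (f (ehat s + xi) + G (ehat s + xi) (uhat s)) with hD
  have hq : ∀ s : ℝ, 0 ≤ s → HasDerivAt q (D s) s := fun s hs =>
    (he s hs).sub (hehat s hs)
  -- key differential inequality
  have key : ∀ s : ℝ, 0 ≤ s →
      ⟪q s, D s⟫ ≤ -σlow * ‖q s‖ ^ 2 + δtilde * ‖q s‖ := by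
    intro s hs
    have hqe : (e s + xi) - (ehat s + xi) = q s := by
      simp only [hqdef]; abel
    have hDeq : D s = (f (e s + xi) - f (ehat s + xi))
        + ((G (e s + xi) - G (ehat s + xi)) (uhat s))
        - σ • (G (e s + xi) (q s)) + δ s := by
      simp only [hD, map_sub, map_smul, ContinuousLinearMap.sub_apply, hqdef]
      abel
    have hinner : ⟪q s, D s⟫
        = ⟪q s, f (e s + xi) - f (ehat s + xi)⟫
          + ⟪q s, (G (e s + xi) - G (ehat s + xi)) (uhat s)⟫
          - σ * ⟪q s, G (e s + xi) (q s)⟫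
          + ⟪q s, δ s⟫ := by
      rw [hDeq, inner_add_right, inner_sub_right, inner_add_right, real_inner_smul_right]
    have h1 : ⟪q s, f (e s + xi) - f (ehat s + xi)⟫ ≤ ‖q s‖ * (Lf * ‖q s‖) := by
      calc ⟪q s, f (e s + xi) - f (ehat s + xi)⟫
          ≤ ‖q s‖ * ‖f (e s + xi) - f (ehat s + xi)‖ := real_inner_le_norm _ _
        _ ≤ ‖q s‖ * (Lf * ‖q s‖) := by
            have := hf (e s + xi) (ehat s + xi)
            rw [hqe] at this
            exact mul_le_mul_of_nonneg_left this (norm_nonneg _)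
    have h2 : ⟪q s, (G (e s + xi) - G (ehat s + xi)) (uhat s)⟫
        ≤ ‖q s‖ * (Lg * ‖q s‖ * utilde) := by
      have hop : ‖(G (e s + xi) - G (ehat s + xi)) (uhat s)‖
          ≤ Lg * ‖q s‖ * utilde := by
        calc ‖(G (e s + xi) - G (ehat s + xi)) (uhat s)‖
            ≤ ‖G (e s + xi) - G (ehat s + xi)‖ * ‖uhat s‖ :=
              ContinuousLinearMap.le_opNorm _ _
          _ ≤ (Lg * ‖q s‖) * utilde := by
              apply mul_le_mul _ (huhat s hs) (norm_nonneg _)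
                (by positivity)
              have := hg (e s + xi) (ehat s + xi)
              rw [hqe] at this
              exact this
      calc ⟪q s, (G (e s + xi) - G (ehat s + xi)) (uhat s)⟫
          ≤ ‖q s‖ * ‖(G (e s + xi) - G (ehat s + xi)) (uhat s)‖ := real_inner_le_norm _ _
        _ ≤ ‖q s‖ * (Lg * ‖q s‖ * utilde) :=
            mul_le_mul_of_nonneg_left hop (norm_nonneg _)
    have h3 : glow * ‖q s‖ ^ 2 ≤ ⟪q s, G (e s + xi) (q s)⟫ := hcoerc _ _
    have h4 : ⟪q s, δ s⟫ ≤ ‖q s‖ * δtilde := by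
      calc ⟪q s, δ s⟫ ≤ ‖q s‖ * ‖δ s‖ := real_inner_le_norm _ _
        _ ≤ ‖q s‖ * δtilde := mul_le_mul_of_nonneg_left (hδ s hs) (norm_nonneg _)
    have hqn : 0 ≤ ‖q s‖ := norm_nonneg _
    rw [hinner]
    nlinarith [sq_nonneg (‖q s‖)]
  -- the squared norm as a real function
  set V : ℝ → ℝ := fun s => ⟪q s, q s⟫ with hV
  have hVnorm : ∀ s, V s = ‖q s‖ ^ 2 := fun s => real_inner_self_eq_norm_sq _
  -- main invariance step via the fencing theorem, for each ε > 0
  intro t ht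
  have hmain : ∀ ε : ℝ, 0 < ε → ‖q t‖ ≤ r + ε := by
    intro ε hε
    have hfence : ∀ ⦃x⦄, x ∈ Set.Icc (0:ℝ) t → V x ≤ (fun _ : ℝ => (r + ε) ^ 2) x := by
      refine image_le_of_deriv_right_lt_deriv_boundary (f := V) (a := 0) (b := t)
        (f' := fun s => ⟪q s, D s⟫ + ⟪D s, q s⟫)
        (B := fun _ : ℝ => (r + ε) ^ 2) (B' := fun _ => (0:ℝ)) ?_ ?_ ?_ ?_ ?_
      · exact fun s hs =>
          (((hq s hs.1).inner ℝ (hq s hs.1)).continuousAt).continuousWithinAt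
      · intro x hx
        exact ((hq x hx.1).inner ℝ (hq x hx.1)).hasDerivWithinAt
      · show V 0 ≤ (r + ε) ^ 2
        rw [hVnorm 0]
        have : ‖q 0‖ ≤ r := h0
        nlinarith [norm_nonneg (q 0)]
      · exact fun x => hasDerivAt_const x _
      · intro x hx hVx
        show ⟪q x, D x⟫ + ⟪D x, q x⟫ < 0
        have hVx' : V x = (r + ε) ^ 2 := hVx
        have hxq : ‖q x‖ = r + ε := by
          have h5 := hVnorm x
          rw [hVx'] at h5
          nlinarith [norm_nonneg (q x)]
        have hk := key x hx.1
        rw [hxq, hrδ] at hk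
        nlinarith [mul_pos (mul_pos hσlow hε) (show (0:ℝ) < r + ε by linarith),
          real_inner_comm (q x) (D x)]
    have h6 : V t ≤ (r + ε) ^ 2 := hfence (Set.mem_Icc.mpr ⟨ht, le_rfl⟩)
    rw [hVnorm t] at h6
    nlinarith [norm_nonneg (q t)]
  exact le_of_forall_pos_le_add hmain
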